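/- Let G be an abelian group, μ a character of G into ℂ\{0}, and (f, g) a solution of the μ-Wilson equation f(xy) + μ(y) f(xy⁻¹) = 2 f(x) g(y) with f ≠ 0. Then there exists a multiplicative function φ : G → ℂ such that g(x) = (φ(x) + μ(x) φ(x⁻¹))/2 for all x ∈ G. -/

import Mathlib

theorem stmt_11 {G : Type*} [CommGroup G] (μ f g : G → ℂ)
    (hμ : ∀ x y, μ (x * y) = μ x * μ y) (hμ0 : ∀ x, μ x ≠ 0)
    (hfg : ∀ x y, f (x * y) + μ y * f (x * y⁻¹) = 2 * f x * g y)
    (hf0 : f ≠ 0) :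
    ∃ φ : G → ℂ, (∀ x y, φ (x * y) = φ x * φ y) ∧
      ∀ x, g x = (φ x + μ x * φ x⁻¹) / 2 := by
  have μ1 : μ 1 = 1 := by
    have h := hμ 1 1
    simp only [one_mul] at h
    have := hμ0 1
    field_simp at h
    tauto
  have hμinv : ∀ x, μ x * μ x⁻¹ = 1 := by
    intro x
    have h := hμ x x⁻¹
    simp only [mul_inv_cancel, μ1] at h
    exact h.symm
  obtain ⟨a, ha⟩ : ∃ a, f a ≠ 0 := by
    by_contra h
    push_neg at h
    exact hf0 (funext h)
  have h2fa : (2 : ℂ) * f a ≠ 0 := mul_ne_zero two_ne_zero ha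
  have g1 : g 1 = 1 := by
    have h := hfg a 1
    simp only [mul_one, inv_one, μ1, one_mul] at h
    have h2 : 2 * f a * g 1 = 2 * f a * 1 := by linear_combination -h
    exact mul_left_cancel₀ h2fa h2
  -- d'Alembert equation for g
  have hd : ∀ y z, g (y * z) + μ z * g (y * z⁻¹) = 2 * g y * g z := by
    intro y z
    have key : 2 * f a * (g (y * z) + μ z * g (y * z⁻¹)) = 2 * f a * (2 * g y * g z) := by
      have h1 := hfg a (y * z)
      have h2 := hfg a (y * z⁻¹)
      have h3 := hfg (a * y) z
      have h4 := hfg (a * y⁻¹) z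
      have h5 := hfg a y
      simp only [hμ, mul_inv_rev, inv_inv, mul_assoc, mul_comm, mul_left_comm] at h1 h2 h3 h4 h5 ⊢
      linear_combination -h1 - μ z * h2 + h3 + μ y * h4 + 2 * g z * h5 + μ y * f (a * (z * y⁻¹)) * (hμinv z)
    exact mul_left_cancel₀ h2fa key
  -- g is μ-even
  have heven : ∀ x, μ x * g x⁻¹ = g x := by
    intro x
    have h := hd 1 x
    simp only [one_mul, g1] at h
    linear_combination h
  have hflip : ∀ u v, μ v * g (u * v⁻¹) = μ u * g (u⁻¹ * v) := by
    intro u v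
    have h := heven (u * v⁻¹)
    rw [show (u * v⁻¹)⁻¹ = u⁻¹ * v by simp [mul_inv_rev, mul_assoc, mul_comm, mul_left_comm], hμ] at h
    linear_combination -μ v * h + μ u * g (u⁻¹ * v) * hμinv v
  have hsq : ∀ x, g (x * x) = 2 * g x * g x - μ x := by
    intro x
    have h := hd x x
    simp only [mul_inv_cancel, g1, mul_one] at h
    linear_combination h
  -- the square identity
  have hE : ∀ x y, (g (x * y) - g x * g y) ^ 2 = (g x ^ 2 - μ x) * (g y ^ 2 - μ y) := by
    intro x y
    have D := hd x y
    have S1 := hd (x * y) (x * y⁻¹)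
    rw [show x * y * (x * y⁻¹) = x * x by simp [mul_assoc, mul_comm, mul_left_comm],
        show x * y * (x * y⁻¹)⁻¹ = y * y by simp [mul_inv_rev, mul_assoc, mul_comm, mul_left_comm],
        hμ] at S1
    have S2 := hsq x
    have S3 := hsq y
    linear_combination g (x * y) * D + (μ y / 2) * S1 - (μ y / 2) * S2
      - (μ y * μ x * μ y⁻¹ / 2) * S3 - (μ x * g y ^ 2 - μ y * μ x / 2) * hμinv y
  by_cases hA : ∀ x, g x ^ 2 = μ x
  · refine ⟨g, fun x y => ?_, fun x => ?_⟩
    · have h := hE x y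
      rw [hA x, hA y] at h
      simp only [sub_self, mul_zero] at h
      have := pow_eq_zero_iff (n := 2) (by norm_num) |>.mp h
      linear_combination this
    · linear_combination (-1/2 : ℂ) * heven x
  · push_neg at hA
    obtain ⟨b, hb⟩ := hA
    obtain ⟨d, hd2⟩ := IsAlgClosed.exists_pow_nat_eq (g b ^ 2 - μ b) (n := 2) (by norm_num)
    have hdne : d ≠ 0 := by
      intro h0
      rw [h0] at hd2
      norm_num at hd2
      exact hb (by linear_combination -hd2)
    have hadd : ∀ x y, g (x * y * b) =
        g (x * y) * g b + g (x * b) * g y + g (y * b) * g x - 2 * g x * g y * g b := by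
      intro x y
      have hd' : ∀ u v, g (u * v) + μ u * g (u⁻¹ * v) = 2 * g u * g v := by
        intro u v
        linear_combination hd u v - hflip u v
      have C := hd (x * b) y
      rw [show x * b * y = x * y * b by simp [mul_assoc, mul_comm, mul_left_comm],
          show x * b * y⁻¹ = x * y⁻¹ * b by simp [mul_assoc, mul_comm, mul_left_comm]] at C
      have B := hd' x (y * b)
      rw [show x * (y * b) = x * y * b by simp [mul_assoc]] at B
      have D := hd x y
      have E := hd (x * y⁻¹) b
      have F := hflip x (y * b)
      rw [show x * (y * b)⁻¹ = x * y⁻¹ * b⁻¹ by simp [mul_inv_rev, mul_assoc, mul_comm, mul_left_comm],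
          hμ] at F
      linear_combination (1/2 : ℂ) * C + (1/2 : ℂ) * B - g b * D - (μ y / 2) * E + (1/2 : ℂ) * F
    have hEE : ∀ x y, (g (x * b) - g x * g b) * (g (y * b) - g y * g b) =
        (g b ^ 2 - μ b) * (g (x * y) - g x * g y) := by
      intro x y
      have P := hd (x * b) (y * b)
      rw [show x * b * (y * b) = x * y * b * b by simp [mul_assoc, mul_comm, mul_left_comm],
          show x * b * (y * b)⁻¹ = x * y⁻¹ by group, hμ] at P
      have Q := hadd x y
      have R := hd (x * y * b) b
      rw [show x * y * b * b⁻¹ = x * y by simp [mul_assoc]] at R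
      have D := hd x y
      linear_combination (-1/2 : ℂ) * P + g b * Q + (1/2 : ℂ) * R + (μ b / 2) * D
    have hodd : ∀ x, μ x * (g (x⁻¹ * b) - g x⁻¹ * g b) = g x * g b - g (x * b) := by
      intro x
      linear_combination hd x b - hflip x b - g b * heven x
    refine ⟨fun x => g x + (g (x * b) - g x * g b) / d, fun x y => ?_, fun x => ?_⟩
    · show g (x * y) + (g (x * y * b) - g (x * y) * g b) / d = _
      have e1 : g (x * y * b) - g (x * y) * g b =
          (g (x * b) - g x * g b) * g y + g x * (g (y * b) - g y * g b) := by
        linear_combination hadd x y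
      have e2 : (g (x * b) - g x * g b) * (g (y * b) - g y * g b) =
          d ^ 2 * (g (x * y) - g x * g y) := by rw [hd2]; exact hEE x y
      field_simp
      linear_combination d * e1 - e2
    · show g x = (g x + (g (x * b) - g x * g b) / d +
        μ x * (g x⁻¹ + (g (x⁻¹ * b) - g x⁻¹ * g b) / d)) / 2
      have hA := heven x
      have hB := hodd x
      set A := g x⁻¹ with hA'
      set B := g (x⁻¹ * b) with hB'
      field_simp
      linear_combination -d * hA - hB
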